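/- Let f : ℝ → ℝ be continuous satisfying |f(u)| ≤ C(1 + |u|^{p-1}) for all u with C > 0 and 2 < p, and 0 < q·F(u) ≤ u·f(u) for all u ≠ 0 with q > 2. Let p' = p/(p-1) be the conjugate exponent. Then there exists a constant C'' > 0 such that |f(u)|^{p'} ≤ C''·u·f(u) whenever |u| ≥ 1. -/

import Mathlib

theorem stmt_2 (f : ℝ → ℝ) (hf : Continuous f)
    (C p : ℝ) (hC : 0 < C) (hp : 2 < p)
    (hgrowth : ∀ u : ℝ, |f u| ≤ C * (1 + |u| ^ (p - 1)))
    (F : ℝ → ℝ) (hF : ∀ u, F u = ∫ s in (0:ℝ)..u, f s)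
    (q : ℝ) (hq : 2 < q)
    (hAR : ∀ u : ℝ, u ≠ 0 → 0 < q * F u ∧ q * F u ≤ u * f u)
    (p' : ℝ) (hp' : p' = p / (p - 1)) :
    ∃ C'' > 0, ∀ u : ℝ, 1 ≤ |u| → |f u| ^ p' ≤ C'' * (u * f u) := by
  have hp1 : (0:ℝ) < p - 1 := by linarith
  have hp'1 : 0 < p' - 1 := by
    have : 1 < p / (p - 1) := (one_lt_div hp1).mpr (by linarith)
    rw [hp']; linarith
  refine ⟨(2 * C) ^ (p' - 1), by positivity, fun u hu => ?_⟩
  have hune : u ≠ 0 := by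
    intro h; rw [h, abs_zero] at hu; linarith
  have hpos : 0 < u * f u := lt_of_lt_of_le (hAR u hune).1 (hAR u hune).2
  have hfpos : 0 < |f u| := by
    rcases eq_or_ne (f u) 0 with h | h
    · rw [h, mul_zero] at hpos; linarith
    · exact abs_pos.mpr h
  have hupos : (0:ℝ) < |u| := by linarith
  have hub : (1:ℝ) ≤ |u| ^ (p - 1) := Real.one_le_rpow hu (le_of_lt hp1)
  have h2 : |f u| ≤ 2 * C * |u| ^ (p - 1) := by
    calc |f u| ≤ C * (1 + |u| ^ (p - 1)) := hgrowth u
    _ ≤ C * (2 * |u| ^ (p - 1)) := by nlinarith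
    _ = 2 * C * |u| ^ (p - 1) := by ring
  have hexp : (p - 1) * (p' - 1) = 1 := by
    rw [hp']; field_simp; ring
  have key : |f u| ^ (p' - 1) ≤ (2 * C) ^ (p' - 1) * |u| := by
    calc |f u| ^ (p' - 1) ≤ (2 * C * |u| ^ (p - 1)) ^ (p' - 1) :=
          Real.rpow_le_rpow (abs_nonneg _) h2 (le_of_lt hp'1)
    _ = (2 * C) ^ (p' - 1) * (|u| ^ (p - 1)) ^ (p' - 1) :=
          Real.mul_rpow (by positivity) (by positivity)
    _ = (2 * C) ^ (p' - 1) * |u| := by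
          rw [← Real.rpow_mul (abs_nonneg u), hexp, Real.rpow_one]
  have habs : |u| * |f u| = u * f u := by
    rw [← abs_mul, abs_of_pos hpos]
  calc |f u| ^ p' = |f u| ^ (p' - 1) * |f u| := by
        rw [← Real.rpow_add_one (ne_of_gt hfpos), sub_add_cancel]
  _ ≤ (2 * C) ^ (p' - 1) * |u| * |f u| := by
        exact mul_le_mul_of_nonneg_right key (abs_nonneg _)
  _ = (2 * C) ^ (p' - 1) * (u * f u) := by
        rw [mul_assoc, habs]
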